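/- arXiv:1602.04036 — 4 statements merged into one kernel-verified Lean document; each statement's English description precedes it below -/
import Mathlib

section
/- Let X and Y be real normed vector spaces, A : X → Y a continuous linear operator, y ∈ Y, q > 1 a real number, u an element of the continuous dual X*, N a natural number, and v*₁, …, v*_N elements of the continuous dual Y*. Set g_k := v*_k ∘ A ∈ X* and β_k := ⟨v*_k, y⟩ for k = 1, …, N, and define h : ℝ^N → ℝ by h(t) = (1/q)‖u − Σ_{k=1}^N t_k g_k‖^q + Σ_{k=1}^N t_k β_k. Suppose t̂ ∈ ℝ^N is a global minimizer of h, and suppose x₊ ∈ X is such that the function w ↦ (1/q)‖w‖^q on X* is Fréchet differentiable at the point u − Σ_k t̂_k g_k with derivative equal to the canonical image of x₊ in the double dual X** (i.e., the functional w ↦ ⟨w, x₊⟩). Then ⟨v*_j, A x₊ − y⟩ = 0 for every j = 1, …, N; that is, all search-direction precursors are orthogonal in the dual pairing to the new residual A x₊ − y. -/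
/-- if `that` globally minimizes the SESOP line-search functional
`h t = (1/q)‖u − Σ tₖ gₖ‖^q + Σ tₖ βₖ` with `gₖ = A* vₖ*` and `βₖ = ⟨vₖ*, y⟩`, and the
map `w ↦ (1/q)‖w‖^q` on `X*` is Fréchet differentiable at `u − Σ thatₖ gₖ` with derivative
the canonical image of `xp` in the double dual, then `⟨vⱼ*, A xp − y⟩ = 0` for all `j`. -/
theorem precursors_orthogonal_to_new_residual
    {X Y : Type*} [NormedAddCommGroup X] [NormedSpace ℝ X]
    [NormedAddCommGroup Y] [NormedSpace ℝ Y]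
    (A : X →L[ℝ] Y) (y : Y) (q : ℝ) (hq : 1 < q)
    (u : X →L[ℝ] ℝ) (N : ℕ) (v : Fin N → (Y →L[ℝ] ℝ))
    (that : Fin N → ℝ)
    (hmin : ∀ t : Fin N → ℝ,
      (1/q) * ‖u - ∑ k, that k • (v k).comp A‖ ^ q + ∑ k, that k * (v k) y ≤
      (1/q) * ‖u - ∑ k, t k • (v k).comp A‖ ^ q + ∑ k, t k * (v k) y)
    (xp : X)
    (hder : HasFDerivAt (fun w : X →L[ℝ] ℝ => (1/q) * ‖w‖ ^ q)
      (NormedSpace.inclusionInDoubleDual ℝ X xp) (u - ∑ k, that k • (v k).comp A)) :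
    ∀ j : Fin N, (v j) (A xp - y) = 0 := by
  intro j
  set g : Fin N → (X →L[ℝ] ℝ) := fun k => (v k).comp A with hg
  set w0 : X →L[ℝ] ℝ := u - ∑ k, that k • g k with hw0
  -- the one-dimensional restriction along direction j
  set F : ℝ → ℝ := fun s =>
    (1/q) * ‖w0 - s • g j‖ ^ q + ((∑ k, that k * (v k) y) + s * (v j) y) with hF
  have hkey : ∀ s : ℝ, F s =
      (1/q) * ‖u - ∑ k, ((that + Pi.single j s : Fin N → ℝ)) k • g k‖ ^ q
        + ∑ k, ((that + Pi.single j s : Fin N → ℝ)) k * (v k) y := by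
    intro s
    have h1 : (∑ k, ((that + Pi.single j s : Fin N → ℝ)) k • g k) = (∑ k, that k • g k) + s • g j := by
      simp only [Pi.add_apply, add_smul]
      rw [Finset.sum_add_distrib]
      congr 1
      simp [Pi.single_apply, ite_smul]
    have h2 : (∑ k, ((that + Pi.single j s : Fin N → ℝ)) k * (v k) y)
        = (∑ k, that k * (v k) y) + s * (v j) y := by
      simp only [Pi.add_apply, add_mul]
      rw [Finset.sum_add_distrib]
      congr 1
      simp [Pi.single_apply, ite_mul]
    simp only [hF, h1, h2, hw0]
    ring_nf
    rw [sub_add_eq_sub_sub]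
  -- F has a local min at 0
  have hF0 : F 0 = (1/q) * ‖w0‖ ^ q + ∑ k, that k * (v k) y := by
    simp [hF]
  have hlocmin : IsLocalMin F 0 := by
    apply IsMinOn.isLocalMin (s := Set.univ) _ Filter.univ_mem
    intro s _
    show F 0 ≤ F s
    rw [hkey s, hF0, hw0]
    exact hmin _
  -- F has derivative at 0
  have hψ : HasDerivAt (fun s : ℝ => w0 - s • g j) (-(g j)) 0 := by
    have : HasDerivAt (fun s : ℝ => s • g j) ((1:ℝ) • g j) 0 :=
      (hasDerivAt_id (0:ℝ)).smul_const (g j)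
    simpa using this.const_sub w0
  have hder' : HasFDerivAt (fun w : X →L[ℝ] ℝ => (1/q) * ‖w‖ ^ q)
      (NormedSpace.inclusionInDoubleDual ℝ X xp) (w0 - (0:ℝ) • g j) := by
    simpa using hder
  have hcomp : HasDerivAt (fun s : ℝ => (1/q) * ‖w0 - s • g j‖ ^ q)
      ((NormedSpace.inclusionInDoubleDual ℝ X xp) (-(g j))) 0 := by
    have := hder'.comp_hasDerivAt 0 hψ
    exact this
  have hlin : HasDerivAt (fun s : ℝ => (∑ k, that k * (v k) y) + s * (v j) y)
      ((v j) y) 0 := by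
    simpa using ((hasDerivAt_id (0:ℝ)).mul_const ((v j) y)).const_add
      (∑ k, that k * (v k) y)
  have hFderiv : HasDerivAt F
      ((NormedSpace.inclusionInDoubleDual ℝ X xp) (-(g j)) + (v j) y) 0 :=
    hcomp.add hlin
  have hzero := hlocmin.hasDerivAt_eq_zero hFderiv
  have hval : (NormedSpace.inclusionInDoubleDual ℝ X xp) (-(g j)) = -(v j) (A xp) := by
    simp [NormedSpace.inclusionInDoubleDual, hg]
  rw [hval] at hzero
  simp only [map_sub]
  linarith
end

section
/- Let X and Y be real normed vector spaces, A : X → Y a continuous linear operator, y ∈ Y with A z = y for some z ∈ X, and r > 0. Let x₁, …, x_N ∈ X with A x_n ≠ y for every n, and let v*₁, …, v*_N ∈ Y* be such that ⟨v*_n, A x_n − y⟩ = ‖A x_n − y‖^r for every n, and ⟨v*_k, A x_n − y⟩ = 0 whenever k < n. Then the functionals A* v*₁, …, A* v*_N (where A* v* := v* ∘ A) are linearly independent in X*, and consequently v*₁, …, v*_N are linearly independent in Y*. -/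
/-- if `⟨vₙ*, A xₙ − y⟩ = ‖A xₙ − y‖^r` and `⟨vₖ*, A xₙ − y⟩ = 0` for `k < n`,
with all residuals nonzero, then the functionals `A* vₙ* = vₙ* ∘ A` are linearly
independent in `X*`, and consequently the `vₙ*` are linearly independent in `Y*`. -/
theorem orthogonalized_precursors_linearIndependent
    {X Y : Type*} [NormedAddCommGroup X] [NormedSpace ℝ X]
    [NormedAddCommGroup Y] [NormedSpace ℝ Y]
    (A : X →L[ℝ] Y) (y : Y) (hy : ∃ z : X, A z = y) (r : ℝ) (hr : 0 < r)
    (N : ℕ) (x : Fin N → X) (v : Fin N → (Y →L[ℝ] ℝ))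
    (hres : ∀ n : Fin N, A (x n) ≠ y)
    (hdual : ∀ n : Fin N, (v n) (A (x n) - y) = ‖A (x n) - y‖ ^ r)
    (horth : ∀ k n : Fin N, k < n → (v k) (A (x n) - y) = 0) :
    LinearIndependent ℝ (fun n : Fin N => (v n).comp A) ∧
      LinearIndependent ℝ v := by
  obtain ⟨z, hz⟩ := hy
  have h1 : LinearIndependent ℝ (fun n : Fin N => (v n).comp A) := by
    rw [Fintype.linearIndependent_iff]
    intro c hsum
    have key : ∀ n : Fin N, (∀ k : Fin N, n < k → c k = 0) → c n = 0 := by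
      intro n hk
      have heval : (∑ k, c k • (v k).comp A) (x n - z) = 0 := by rw [hsum]; rfl
      have heval' : ∑ k, c k * (v k) (A (x n) - y) = 0 := by
        simpa [ContinuousLinearMap.sum_apply, map_sub, hz, mul_sub, Finset.sum_sub_distrib] using heval
      have hsplit : ∑ k, c k * (v k) (A (x n) - y) = c n * (v n) (A (x n) - y) := by
        rw [Finset.sum_eq_single n]
        · intro k _ hkn
          rcases lt_or_gt_of_ne hkn with h | h
          · rw [horth k n h, mul_zero]
          · rw [hk k h, zero_mul]
        · intro h; exact absurd (Finset.mem_univ n) h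
      rw [hsplit, hdual n] at heval'
      have hpos : (0:ℝ) < ‖A (x n) - y‖ ^ r := by
        apply Real.rpow_pos_of_pos
        rw [norm_pos_iff, sub_ne_zero]
        exact hres n
      exact (mul_eq_zero.mp heval').resolve_right hpos.ne'
    -- downward induction
    have hall : ∀ d : ℕ, ∀ n : Fin N, N ≤ n.1 + d + 1 → c n = 0 := by
      intro d
      induction d with
      | zero =>
        intro n hn
        exact key n (fun k hk => by
          exfalso
          have h1 := k.isLt
          have h2 := Fin.lt_iff_val_lt_val.mp hk
          omega)
      | succ d ih =>
        intro n hn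
        exact key n (fun k hk => ih k (by omega))
    intro n
    exact hall N n (by omega)
  refine ⟨h1, ?_⟩
  let L : (Y →L[ℝ] ℝ) →ₗ[ℝ] (X →L[ℝ] ℝ) :=
    { toFun := fun w => w.comp A
      map_add' := fun w₁ w₂ => by ext; simp
      map_smul' := fun c w => by ext; simp }
  exact LinearIndependent.of_comp L h1
end

section
/- Let X and Y be real normed vector spaces, A : X → Y a nonzero continuous linear operator, 0 ≠ x ∈ X, 0 ≠ y* ∈ Y*, and let p, q > 1 be conjugate exponents (1/p + 1/q = 1). Let τ ∈ (0, 1] and set μ := τ ‖x‖^{p−1} / (‖A‖ ‖y*‖). Let j ∈ X* satisfy ‖j‖ = ‖x‖^{p−1} (a duality-mapping value J_p(x)), write w* := μ · (y* ∘ A) ∈ X*, and let G > 0. Let ρ : ℝ → ℝ be measurable, non-negative and non-decreasing on [0, ∞), with t ↦ ρ(t)/t non-decreasing on (0, ∞). Define σ̃ := q G ∫₀¹ (max(‖j − t w*‖, ‖j‖))^q / t · ρ( t ‖w*‖ / max(‖j − t w*‖, ‖j‖) ) dt. Then (1/q) σ̃ ≤ 2^q G ‖x‖^p ρ(τ). 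-/
set_option maxHeartbeats 1000000 in
/-- the upper bound on the Xu–Roach remainder term
`σ̃ = q G ∫₀¹ (max(‖j − t w*‖, ‖j‖))^q / t · ρ(t‖w*‖ / max(‖j − t w*‖, ‖j‖)) dt`
for the step width `μ = τ ‖x‖^{p−1} / (‖A‖ ‖y*‖)`:  `(1/q) σ̃ ≤ 2^q G ‖x‖^p ρ(τ)`. -/
theorem sigma_tilde_upper_bound
    {X Y : Type*} [NormedAddCommGroup X] [NormedSpace ℝ X]
    [NormedAddCommGroup Y] [NormedSpace ℝ Y]
    (A : X →L[ℝ] Y) (hA : A ≠ 0) (x : X) (hx : x ≠ 0)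
    (y' : Y →L[ℝ] ℝ) (hy' : y' ≠ 0)
    (p q : ℝ) (hp : 1 < p) (hq : 1 < q) (hpq : 1/p + 1/q = 1)
    (τ : ℝ) (hτ : τ ∈ Set.Ioc (0:ℝ) 1)
    (μ : ℝ) (hμ : μ = τ * ‖x‖ ^ (p - 1) / (‖A‖ * ‖y'‖))
    (j : X →L[ℝ] ℝ) (hj : ‖j‖ = ‖x‖ ^ (p - 1))
    (w : X →L[ℝ] ℝ) (hw : w = μ • y'.comp A)
    (G : ℝ) (hG : 0 < G)
    (ρ : ℝ → ℝ) (hmeas : Measurable ρ)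
    (hnonneg : ∀ t ∈ Set.Ici (0:ℝ), 0 ≤ ρ t)
    (hmono : MonotoneOn ρ (Set.Ici (0:ℝ)))
    (hratio : MonotoneOn (fun t => ρ t / t) (Set.Ioi (0:ℝ)))
    (σ' : ℝ)
    (hσ : σ' = q * G * ∫ t in (0:ℝ)..1,
      (max ‖j - t • w‖ ‖j‖) ^ q / t * ρ (t * ‖w‖ / max ‖j - t • w‖ ‖j‖)) :
    (1/q) * σ' ≤ 2 ^ q * G * ‖x‖ ^ p * ρ τ := by
  obtain ⟨hτ0, hτ1⟩ := hτ
  have hx0 : (0:ℝ) < ‖x‖ := norm_pos_iff.mpr hx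
  have hA0 : (0:ℝ) < ‖A‖ := norm_pos_iff.mpr hA
  have hy0 : (0:ℝ) < ‖y'‖ := norm_pos_iff.mpr hy'
  have hj0 : (0:ℝ) < ‖j‖ := by rw [hj]; exact Real.rpow_pos_of_pos hx0 _
  have hρτ : 0 ≤ ρ τ := hnonneg τ hτ0.le
  have hμ0 : 0 ≤ μ := by
    rw [hμ]
    positivity
  have hwle : ‖w‖ ≤ τ * ‖j‖ := by
    rw [hw, hj]
    calc ‖μ • y'.comp A‖ = |μ| * ‖y'.comp A‖ := by
          rw [norm_smul μ (y'.comp A), Real.norm_eq_abs]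
      _ ≤ μ * (‖y'‖ * ‖A‖) := by
          rw [abs_of_nonneg hμ0]
          exact mul_le_mul_of_nonneg_left (ContinuousLinearMap.opNorm_comp_le _ _) hμ0
      _ = τ * ‖x‖ ^ (p - 1) := by
          rw [hμ]; field_simp
  have hρ1 : 0 ≤ ρ 1 := hnonneg 1 (Set.mem_Ici.mpr zero_le_one)
  have hρ0 : ρ 0 = 0 := by
    have key : ∀ ε > (0:ℝ), ρ 0 ≤ ε := by
      intro ε hε
      set t := min 1 (ε / (ρ 1 + 1)) with ht
      have ht0 : 0 < t := lt_min one_pos (by positivity)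
      have ht1 : t ≤ 1 := min_le_left _ _
      have h1 : ρ t / t ≤ ρ 1 / 1 := hratio ht0 (by norm_num) ht1
      have h2 : ρ t ≤ t * ρ 1 := by
        rw [div_le_iff₀ ht0] at h1
        linarith [h1]
      have h3 : ρ 0 ≤ ρ t := hmono (Set.mem_Ici.mpr le_rfl) ht0.le ht0.le
      have h4 : t * ρ 1 ≤ ε := by
        calc t * ρ 1 ≤ (ε / (ρ 1 + 1)) * ρ 1 :=
              mul_le_mul_of_nonneg_right (min_le_right _ _) hρ1
          _ ≤ ε := by
              rw [div_mul_eq_mul_div, div_le_iff₀ (by positivity)]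
              nlinarith
      linarith
    have := hnonneg 0 (Set.mem_Ici.mpr le_rfl)
    by_contra h
    have h0 : 0 < ρ 0 := lt_of_le_of_ne this (Ne.symm h)
    linarith [key (ρ 0 / 2) (by linarith)]
  -- conjugate exponent facts
  have hpq' : p + q = p * q := by
    field_simp at hpq
    linarith
  have hpqq : (p - 1) * q = p := by linear_combination -1 * hpq'
  have hjq : ‖j‖ ^ q = ‖x‖ ^ p := by
    rw [hj, ← Real.rpow_mul hx0.le, hpqq]
  set f : ℝ → ℝ := fun t => (max ‖j - t • w‖ ‖j‖) ^ q / t * ρ (t * ‖w‖ / max ‖j - t • w‖ ‖j‖) with hfdef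
  set C : ℝ := 2 ^ (q - 1) * ‖x‖ ^ p * ρ τ with hCdef
  have hC0 : 0 ≤ C := by positivity
  have hfle : ∀ t ∈ Set.Icc (0:ℝ) 1, f t ≤ C := by
    intro t ⟨ht0, ht1⟩
    rcases eq_or_lt_of_le ht0 with rfl | ht0'
    · have h0 : f 0 = 0 := by simp [hfdef, hρ0]
      rw [h0]; exact hC0
    set M := max ‖j - t • w‖ ‖j‖ with hM
    have hMj : ‖j‖ ≤ M := le_max_right _ _
    have hM0 : 0 < M := lt_of_lt_of_le hj0 hMj
    have hMle : M ≤ 2 * ‖j‖ := by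
      apply max_le _ (by linarith)
      calc ‖j - t • w‖ ≤ ‖j‖ + ‖t • w‖ := norm_sub_le _ _
        _ = ‖j‖ + t * ‖w‖ := by
            rw [norm_smul t w, Real.norm_eq_abs, abs_of_nonneg ht0]
        _ ≤ ‖j‖ + 1 * (τ * ‖j‖) := by
            gcongr
        _ ≤ 2 * ‖j‖ := by
            have h2 := mul_le_of_le_one_left hj0.le hτ1
            linarith
    rcases eq_or_lt_of_le (norm_nonneg w) with hw0 | hw0
    · have : f t = 0 := by
        simp only [hfdef, ← hM, ← hw0]
        simp [hρ0]
      rw [this]; exact hC0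
    · set s := t * ‖w‖ / M with hs
      have hs0 : 0 < s := div_pos (mul_pos ht0' hw0) hM0
      have hsτ : s ≤ τ := by
        rw [hs, div_le_iff₀ hM0]
        calc t * ‖w‖ ≤ 1 * (τ * ‖j‖) := by gcongr
          _ ≤ τ * M := by rw [one_mul]; exact mul_le_mul_of_nonneg_left hMj hτ0.le
      have hratio' : ρ s / s ≤ ρ τ / τ := hratio hs0 hτ0 hsτ
      have hρs : ρ s ≤ s * (ρ τ / τ) := by
        rw [div_le_div_iff₀ hs0 hτ0] at hratio'
        rw [mul_comm, div_mul_eq_mul_div, le_div_iff₀ hτ0]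
        linarith
      have hMq0 : 0 ≤ M ^ q / t := by positivity
      calc f t = M ^ q / t * ρ s := rfl
        _ ≤ M ^ q / t * (s * (ρ τ / τ)) := mul_le_mul_of_nonneg_left hρs hMq0
        _ = M ^ (q - 1) * ‖w‖ * (ρ τ / τ) := by
            rw [hs, Real.rpow_sub hM0, Real.rpow_one]
            field_simp
        _ ≤ (2 * ‖j‖) ^ (q - 1) * (τ * ‖j‖) * (ρ τ / τ) := by
            have h1 : M ^ (q-1) ≤ (2*‖j‖)^(q-1) :=
              Real.rpow_le_rpow hM0.le hMle (by linarith)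
            have h2 : (0:ℝ) ≤ ρ τ / τ := div_nonneg hρτ hτ0.le
            have h3 : (0:ℝ) ≤ (2*‖j‖)^(q-1) := Real.rpow_nonneg (by positivity) _
            exact mul_le_mul_of_nonneg_right
              (mul_le_mul h1 hwle (norm_nonneg w) h3) h2
        _ = C := by
            rw [Real.mul_rpow (by norm_num) hj0.le, Real.rpow_sub hj0, Real.rpow_one,
              hCdef, ← hjq]
            field_simp
  have hI : (∫ t in (0:ℝ)..1, f t) ≤ C := by
    by_cases hint : IntervalIntegrable f MeasureTheory.volume 0 1
    · calc (∫ t in (0:ℝ)..1, f t) ≤ ∫ _ in (0:ℝ)..1, C :=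
          intervalIntegral.integral_mono_on zero_le_one hint intervalIntegrable_const hfle
        _ = C := by simp
    · rw [intervalIntegral.integral_undef hint]; exact hC0
  have hq0 : (0:ℝ) < q := by linarith
  have hσ' : (1/q) * σ' = G * ∫ t in (0:ℝ)..1, f t := by
    rw [hσ]; field_simp
  rw [hσ']
  calc G * ∫ t in (0:ℝ)..1, f t ≤ G * C := mul_le_mul_of_nonneg_left hI hG.le
    _ = 2 ^ (q-1) * G * ‖x‖ ^ p * ρ τ := by rw [hCdef]; ring
    _ ≤ 2 ^ q * G * ‖x‖ ^ p * ρ τ := by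
        have h5 : (2:ℝ) ^ (q-1) ≤ 2 ^ q :=
          Real.rpow_le_rpow_of_exponent_le (by norm_num) (by linarith)
        have h0 : (0:ℝ) ≤ G * ‖x‖ ^ p * ρ τ := by positivity
        calc 2 ^ (q-1) * G * ‖x‖ ^ p * ρ τ
            = 2 ^ (q-1) * (G * ‖x‖ ^ p * ρ τ) := by ring
          _ ≤ 2 ^ q * (G * ‖x‖ ^ p * ρ τ) := mul_le_mul_of_nonneg_right h5 h0
          _ = 2 ^ q * G * ‖x‖ ^ p * ρ τ := by ring
end

section
/- Let X be a real normed vector space and let p, q > 1 be conjugate exponents (1/p + 1/q = 1). Let x, x₊, z ∈ X and let j, j₊ ∈ X* satisfy ⟨j, x⟩ = ‖x‖^p, ‖j‖ = ‖x‖^{p−1}, ⟨j₊, x₊⟩ = ‖x₊‖^p, and ‖j₊‖ = ‖x₊‖^{p−1}. Define the Bregman distances D(x, w) := (1/q)‖x‖^p − ⟨j, w⟩ + (1/p)‖w‖^p and D(x₊, w) := (1/q)‖x₊‖^p − ⟨j₊, w⟩ + (1/p)‖w‖^p. Suppose there are g₁, …, g_N ∈ X*, β₁, …, β_N ∈ ℝ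 and t ∈ ℝ^N such that j − j₊ = Σ_{k=1}^N t_k g_k, and such that both x₊ and z lie on every hyperplane: ⟨g_k, x₊⟩ = β_k and ⟨g_k, z⟩ = β_k for all k. Then the Pythagoras-type identity D(x, z) = D(x, x₊) + D(x₊, z) holds, and in particular D(x₊, z) ≤ D(x, z); i.e., the SESOP update x₊ is the Bregman projection of x onto the intersection of the hyperplanes H(g_k, β_k). -/
/-- Pythagoras-type identity for the SESOP update: if `j − jp = Σ tₖ gₖ`
and both `xp` and `z` lie on every hyperplane `H(gₖ, βₖ)`, then
`D(x, z) = D(x, xp) + D(xp, z)`, and in particular `D(xp, z) ≤ D(x, z)`. -/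
theorem sesop_update_bregman_pythagoras
    {X : Type*} [NormedAddCommGroup X] [NormedSpace ℝ X]
    (p q : ℝ) (hp : 1 < p) (hq : 1 < q) (hpq : 1/p + 1/q = 1)
    (x xp z : X) (j jp : X →L[ℝ] ℝ)
    (hjx : j x = ‖x‖ ^ p) (hjnorm : ‖j‖ = ‖x‖ ^ (p - 1))
    (hjpx : jp xp = ‖xp‖ ^ p) (hjpnorm : ‖jp‖ = ‖xp‖ ^ (p - 1))
    (N : ℕ) (g : Fin N → (X →L[ℝ] ℝ)) (β : Fin N → ℝ) (t : Fin N → ℝ)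
    (hupdate : j - jp = ∑ k, t k • g k)
    (hxpmem : ∀ k, (g k) xp = β k) (hzmem : ∀ k, (g k) z = β k) :
    ((1/q) * ‖x‖ ^ p - j z + (1/p) * ‖z‖ ^ p =
        ((1/q) * ‖x‖ ^ p - j xp + (1/p) * ‖xp‖ ^ p) +
        ((1/q) * ‖xp‖ ^ p - jp z + (1/p) * ‖z‖ ^ p)) ∧
      (1/q) * ‖xp‖ ^ p - jp z + (1/p) * ‖z‖ ^ p ≤
        (1/q) * ‖x‖ ^ p - j z + (1/p) * ‖z‖ ^ p := by
  have hp0 : (0:ℝ) < p := by linarith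
  have hq0 : (0:ℝ) < q := by linarith
  have hpq' : (p-1)*q = p := by
    field_simp at hpq
    nlinarith
  have hsum : j z - jp z = j xp - jp xp := by
    have h1 : (j - jp) z = (j - jp) xp := by
      rw [hupdate]
      simp [ContinuousLinearMap.sum_apply, hxpmem, hzmem]
    simpa using h1
  have hcomb : ∀ a : ℝ, (1/q) * a + (1/p) * a = a := by
    intro a
    calc (1/q) * a + (1/p) * a = (1/p + 1/q) * a := by ring
      _ = a := by rw [hpq, one_mul]
  have hiden : (1/q) * ‖x‖ ^ p - j z + (1/p) * ‖z‖ ^ p =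
      ((1/q) * ‖x‖ ^ p - j xp + (1/p) * ‖xp‖ ^ p) +
      ((1/q) * ‖xp‖ ^ p - jp z + (1/p) * ‖z‖ ^ p) := by
    have h2 : jp xp = (1/q) * ‖xp‖ ^ p + (1/p) * ‖xp‖ ^ p := by
      rw [hjpx, hcomb]
    nlinarith [hsum, h2]
  refine ⟨hiden, ?_⟩
  have hbound : j xp ≤ ‖j‖ * ‖xp‖ := by
    calc j xp ≤ |j xp| := le_abs_self _
      _ = ‖j xp‖ := rfl
      _ ≤ ‖j‖ * ‖xp‖ := j.le_opNorm xp
  have hconj : Real.HolderConjugate q p := Real.holderConjugate_iff.mpr ⟨hq, by rw [inv_eq_one_div, inv_eq_one_div, add_comm]; exact hpq⟩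
  have hyoung := Real.young_inequality_of_nonneg
    (Real.rpow_nonneg (norm_nonneg x) (p-1)) (norm_nonneg xp) hconj
  have hpow : (‖x‖ ^ (p-1)) ^ q = ‖x‖ ^ p := by
    rw [← Real.rpow_mul (norm_nonneg x), hpq']
  rw [hpow] at hyoung
  -- hyoung : ‖x‖^(p-1) * ‖xp‖ ≤ ‖x‖^p / q + ‖xp‖^p / p
  have hD : 0 ≤ (1/q) * ‖x‖ ^ p - j xp + (1/p) * ‖xp‖ ^ p := by
    have : j xp ≤ (1/q) * ‖x‖ ^ p + (1/p) * ‖xp‖ ^ p := by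
      calc j xp ≤ ‖j‖ * ‖xp‖ := hbound
        _ = ‖x‖ ^ (p-1) * ‖xp‖ := by rw [hjnorm]
        _ ≤ ‖x‖ ^ p / q + ‖xp‖ ^ p / p := hyoung
        _ = (1/q) * ‖x‖ ^ p + (1/p) * ‖xp‖ ^ p := by ring
    linarith
  linarith [hiden, hD]
end
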